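/- With M a finitely generated W_n(k)-module and Φ : M → M a σ-linear endomorphism as above, the canonical W_n(k)-linear map M^{Φ=1} ⊗_{Z/p^n} W_n(k) → M (sending m ⊗ λ to λm) is injective. -/

import Mathlib

open scoped TensorProduct

/-- An algebraic closure of the finite field `𝔽_q` with `q = p ^ d` elements. -/
abbrev FqBar (p d : ℕ) [Fact p.Prime] : Type :=
  AlgebraicClosure (GaloisField p d)

/-- The Frobenius `σ` of the truncated Witt vectors `W_n(R)` of a ring `R` of characteristic
`p`, induced by the `p`-th power map on `R`: it acts coefficientwise by `x ↦ x ^ p`. -/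
noncomputable def truncatedWittFrobenius (p n : ℕ) [Fact p.Prime] (R : Type*) [CommRing R] :
    TruncatedWittVector p n R → TruncatedWittVector p n R :=
  fun x => TruncatedWittVector.mk p fun i => x.coeff i ^ p

/-- The subgroup of fixed points of an additive endomorphism `Φ` (i.e. `M^{Φ=1}`). -/
def AddMonoidHom.fixedSubgroup {M : Type*} [AddCommGroup M] (Φ : M →+ M) : AddSubgroup M where
  carrier := {x | Φ x = x}
  zero_mem' := map_zero Φ
  add_mem' := fun {a b} ha hb => by
    simp only [Set.mem_setOf_eq] at *; rw [map_add, ha, hb]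
  neg_mem' := fun {a} ha => by
    simp only [Set.mem_setOf_eq] at *; rw [map_neg, ha]

/-- `p ^ n = 0` in the length-`n` truncated Witt vectors of a ring of characteristic `p`. -/
lemma TruncatedWittVector.p_pow_natCast_eq_zero (p n : ℕ) [hp : Fact p.Prime]
    (R : Type*) [CommRing R] [CharP R p] :
    ((p ^ n : ℕ) : TruncatedWittVector p n R) = 0 := by
  push_cast
  have h : (p : TruncatedWittVector p n R) ^ n =
      WittVector.truncate n ((p : WittVector p R) ^ n) := by
    rw [RingHom.map_pow, map_natCast]
  rw [h]
  apply TruncatedWittVector.ext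
  intro i
  rw [WittVector.coeff_truncate, TruncatedWittVector.coeff_zero,
    WittVector.coeff_p_pow_eq_zero]
  exact i.2.ne


/-! ### Auxiliary development -/

set_option linter.unusedSectionVars false
namespace StmtAux

open WittVector

variable {p : ℕ} [hp : Fact p.Prime]

section frob

variable {R : Type*} [CommRing R] [CharP R p]

lemma trFrob_coeff (n : ℕ) (x : TruncatedWittVector p n R) (i : Fin n) :
    (truncatedWittFrobenius p n R x).coeff i = x.coeff i ^ p :=
  TruncatedWittVector.coeff_mk _ _

lemma trFrob_truncate (n : ℕ) (x : WittVector p R) :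
    truncatedWittFrobenius p n R (WittVector.truncate n x)
      = WittVector.truncate n (frobenius x) := by
  apply TruncatedWittVector.ext
  intro i
  rw [trFrob_coeff, WittVector.coeff_truncate, WittVector.coeff_truncate,
    coeff_frobenius_charP]

/-- The truncated Frobenius as a ring hom. -/
noncomputable def trFrob (n : ℕ) :
    TruncatedWittVector p n R →+* TruncatedWittVector p n R where
  toFun := truncatedWittFrobenius p n R
  map_one' := by
    have h := trFrob_truncate (p := p) n (1 : WittVector p R)
    simpa using h
  map_zero' := by
    have h := trFrob_truncate (p := p) n (0 : WittVector p R)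
    simpa using h
  map_mul' := fun a b => by
    obtain ⟨x, rfl⟩ := WittVector.truncate_surjective p n R a
    obtain ⟨y, rfl⟩ := WittVector.truncate_surjective p n R b
    show truncatedWittFrobenius p n R _ =
      truncatedWittFrobenius p n R _ * truncatedWittFrobenius p n R _
    rw [trFrob_truncate, trFrob_truncate, ← map_mul, ← map_mul, trFrob_truncate, map_mul]
  map_add' := fun a b => by
    obtain ⟨x, rfl⟩ := WittVector.truncate_surjective p n R a
    obtain ⟨y, rfl⟩ := WittVector.truncate_surjective p n R b
    show truncatedWittFrobenius p n R _ =
      truncatedWittFrobenius p n R _ + truncatedWittFrobenius p n R _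
    rw [trFrob_truncate, trFrob_truncate, ← map_add, ← map_add, trFrob_truncate, map_add]

@[simp] lemma trFrob_apply (n : ℕ) (x : TruncatedWittVector p n R) :
    trFrob n x = truncatedWittFrobenius p n R x := rfl

end frob


section map

variable {R S : Type*} [CommRing R] [CommRing S]

/-- coefficientwise application of `f`. -/
noncomputable def trMapFun (f : R →+* S) (n : ℕ) (x : TruncatedWittVector p n R) :
    TruncatedWittVector p n S :=
  TruncatedWittVector.mk p fun i => f (x.coeff i)

lemma trMapFun_truncate (f : R →+* S) (n : ℕ) (x : WittVector p R) :
    trMapFun f n (WittVector.truncate n x) = WittVector.truncate n (WittVector.map f x) := by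
  apply TruncatedWittVector.ext
  intro i
  rw [trMapFun, TruncatedWittVector.coeff_mk, WittVector.coeff_truncate,
    WittVector.coeff_truncate, WittVector.map_coeff]

/-- Functoriality of truncated Witt vectors. -/
noncomputable def trMap (f : R →+* S) (n : ℕ) :
    TruncatedWittVector p n R →+* TruncatedWittVector p n S where
  toFun := trMapFun f n
  map_one' := by
    have h := trMapFun_truncate f n (1 : WittVector p R)
    simpa using h
  map_zero' := by
    have h := trMapFun_truncate f n (0 : WittVector p R)
    simpa using h
  map_mul' := fun a b => by
    obtain ⟨x, rfl⟩ := WittVector.truncate_surjective p n R a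
    obtain ⟨y, rfl⟩ := WittVector.truncate_surjective p n R b
    show trMapFun f n _ = trMapFun f n _ * trMapFun f n _
    rw [trMapFun_truncate, trMapFun_truncate, ← map_mul, ← map_mul, trMapFun_truncate,
      map_mul]
  map_add' := fun a b => by
    obtain ⟨x, rfl⟩ := WittVector.truncate_surjective p n R a
    obtain ⟨y, rfl⟩ := WittVector.truncate_surjective p n R b
    show trMapFun f n _ = trMapFun f n _ + trMapFun f n _
    rw [trMapFun_truncate, trMapFun_truncate, ← map_add, ← map_add, trMapFun_truncate,
      map_add]

@[simp] lemma trMap_coeff (f : R →+* S) (n : ℕ) (x : TruncatedWittVector p n R) (i : Fin n) :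
    (trMap f n x).coeff i = f (x.coeff i) :=
  TruncatedWittVector.coeff_mk _ _

lemma trMap_injective (f : R →+* S) (hf : Function.Injective f) (n : ℕ) :
    Function.Injective (trMap (p := p) f n) := by
  intro x y h
  apply TruncatedWittVector.ext
  intro i
  apply hf
  rw [← trMap_coeff f n x i, ← trMap_coeff f n y i, h]

end map


section primeField

variable {K : Type*} [Field K] [CharP K p]

open Polynomial in
lemma exists_zmod_of_pow_eq (a : K) (ha : a ^ p = a) :
    ∃ c : ZMod p, ZMod.castHom (dvd_refl p) K c = a := by
  by_contra hcon
  push_neg at hcon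
  set ψ := ZMod.castHom (dvd_refl p) K with hψ
  have hψinj : Function.Injective ψ := ψ.injective
  set f : K[X] := X ^ p - X with hf
  have hp2 : 1 < p := hp.out.one_lt
  have hdeg : f.degree = p := by
    rw [hf]
    rw [degree_sub_eq_left_of_degree_lt]
    · exact degree_X_pow p
    · rw [degree_X_pow, degree_X]
      exact_mod_cast hp2
  classical
  have hf0 : f ≠ 0 := by
    intro h
    rw [h, degree_zero] at hdeg
    exact (by simp : (⊥ : WithBot ℕ) ≠ (p : WithBot ℕ)) hdeg
  have hroot : ∀ c : ZMod p, f.IsRoot (ψ c) := by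
    intro c
    simp only [hf, IsRoot.def, eval_sub, eval_pow, eval_X]
    rw [← map_pow, ZMod.pow_card, sub_self]
  have haroot : f.IsRoot a := by
    simp only [hf, IsRoot.def, eval_sub, eval_pow, eval_X, ha, sub_self]
  set S : Finset K := insert a (Finset.image ψ Finset.univ) with hS
  have hsub : S ⊆ f.roots.toFinset := by
    intro x hx
    rw [Multiset.mem_toFinset, mem_roots hf0]
    rcases Finset.mem_insert.mp hx with rfl | hx
    · exact haroot
    · obtain ⟨c, _, rfl⟩ := Finset.mem_image.mp hx
      exact hroot c
  have hcard : S.card = p + 1 := by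
    rw [hS, Finset.card_insert_of_notMem (by
      intro hmem
      obtain ⟨c, _, hc⟩ := Finset.mem_image.mp hmem
      exact hcon c hc)]
    rw [Finset.card_image_of_injective _ hψinj, Finset.card_univ, ZMod.card]
  have hle : S.card ≤ p := by
    calc S.card ≤ f.roots.toFinset.card := Finset.card_le_card hsub
    _ ≤ Multiset.card f.roots := f.roots.toFinset_card_le
    _ ≤ p := by
        have := Polynomial.card_roots hf0
        rw [hdeg] at this
        exact_mod_cast this
  omega

end primeField

section kernel

variable {K : Type*} [Field K] [CharP K p] {n : ℕ}
variable [Algebra (ZMod (p ^ n)) (TruncatedWittVector p n K)]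

lemma algebraMap_eq_trMap_comp :
    algebraMap (ZMod (p ^ n)) (TruncatedWittVector p n K) =
      (trMap (ZMod.castHom (dvd_refl p) K) n).comp
        (TruncatedWittVector.zmodEquivTrunc p n : ZMod (p ^ n) →+* TruncatedWittVector p n (ZMod p)) :=
  RingHom.ext_zmod _ _

lemma algebraMap_injective_trunc :
    Function.Injective (algebraMap (ZMod (p ^ n)) (TruncatedWittVector p n K)) := by
  rw [algebraMap_eq_trMap_comp]
  exact (trMap_injective _ (ZMod.castHom (dvd_refl p) K).injective n).comp
    (TruncatedWittVector.zmodEquivTrunc p n).injective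

lemma trFrob_fixed_iff (x : TruncatedWittVector p n K) :
    truncatedWittFrobenius p n K x = x ↔
      x ∈ Set.range (algebraMap (ZMod (p ^ n)) (TruncatedWittVector p n K)) := by
  constructor
  · intro hx
    have hcoeff : ∀ i : Fin n, x.coeff i ^ p = x.coeff i := by
      intro i
      have := congrArg (fun z => TruncatedWittVector.coeff i z) hx
      simpa [trFrob_coeff] using this
    choose c hc using fun i => exists_zmod_of_pow_eq (p := p) (x.coeff i) (hcoeff i)
    set y : TruncatedWittVector p n (ZMod p) := TruncatedWittVector.mk p c with hy
    refine ⟨(TruncatedWittVector.zmodEquivTrunc p n).symm y, ?_⟩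
    rw [algebraMap_eq_trMap_comp]
    show trMap (ZMod.castHom (dvd_refl p) K) n
      ((TruncatedWittVector.zmodEquivTrunc p n) ((TruncatedWittVector.zmodEquivTrunc p n).symm y)) = x
    rw [RingEquiv.apply_symm_apply]
    apply TruncatedWittVector.ext
    intro i
    rw [trMap_coeff, hy, TruncatedWittVector.coeff_mk]
    exact hc i
  · rintro ⟨a, rfl⟩
    have h : (trFrob n).comp (algebraMap (ZMod (p ^ n)) (TruncatedWittVector p n K)) =
        algebraMap (ZMod (p ^ n)) (TruncatedWittVector p n K) := RingHom.ext_zmod _ _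
    exact congrArg (fun g => g a) h

end kernel


section surj

variable {K : Type*} [Field K] [CharP K p]

lemma iterate_verschiebung_coeff_lt (x : WittVector p K) (m j : ℕ) (h : j < m) :
    (verschiebung^[m] x).coeff j = 0 := by
  induction m generalizing j with
  | zero => omega
  | succ m ih =>
    rw [Function.iterate_succ_apply']
    cases j with
    | zero => exact verschiebung_coeff_zero _
    | succ j =>
      rw [verschiebung_coeff_succ]
      exact ih j (by omega)

lemma ghostComponent_zero_eq (x : WittVector p K) :
    ghostComponent 0 x = x.coeff 0 := by
  rw [ghostComponent_apply, wittPolynomial_zero, MvPolynomial.aeval_X]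

lemma coeff_zero_sub (x y : WittVector p K) : (x - y).coeff 0 = x.coeff 0 - y.coeff 0 := by
  rw [← ghostComponent_zero_eq, ← ghostComponent_zero_eq, ← ghostComponent_zero_eq, map_sub]

variable (n : ℕ)

/-- The additive "last coordinate" map `𝕎 K → W_{n+1}(K)`. -/
noncomputable def dD (x : WittVector p K) : TruncatedWittVector p (n + 1) K :=
  WittVector.truncate (n + 1) (verschiebung^[n] x)

lemma dD_coeff (x : WittVector p K) (i : Fin (n + 1)) :
    (dD n x).coeff i = if (i : ℕ) = n then x.coeff 0 else 0 := by
  rw [dD, WittVector.coeff_truncate]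
  rcases eq_or_lt_of_le (Nat.lt_succ_iff.mp i.2) with h | h
  · rw [if_pos h, h]
    have := iterate_verschiebung_coeff x n 0
    rwa [zero_add] at this
  · rw [if_neg (by omega)]
    exact iterate_verschiebung_coeff_lt x n i h

lemma dD_sub (x y : WittVector p K) : dD n (x - y) = dD n x - dD n y := by
  rw [dD, dD, dD, iterate_map_sub (verschiebung (p := p) (R := K)) n x y, map_sub]

lemma iterate_map_verschiebung (f : K →+* K) (m : ℕ) (x : WittVector p K) :
    WittVector.map f (verschiebung^[m] x) = verschiebung^[m] (WittVector.map f x) := by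
  induction m generalizing x with
  | zero => rfl
  | succ m ih =>
    rw [Function.iterate_succ_apply', Function.iterate_succ_apply', map_verschiebung, ih]

lemma trFrob_dD (x : WittVector p K) :
    truncatedWittFrobenius p (n + 1) K (dD n x) = dD n (WittVector.map (_root_.frobenius K p) x) := by
  rw [dD, trFrob_truncate, frobenius_eq_map_frobenius, dD, iterate_map_verschiebung]

lemma trFrob_truncate_le {m n : ℕ} (h : n ≤ m) (x : TruncatedWittVector p m K) :
    TruncatedWittVector.truncate h (truncatedWittFrobenius p m K x)
      = truncatedWittFrobenius p n K (TruncatedWittVector.truncate h x) := by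
  apply TruncatedWittVector.ext
  intro i
  rw [TruncatedWittVector.coeff_truncate, trFrob_coeff, trFrob_coeff,
    TruncatedWittVector.coeff_truncate]

lemma eq_dD_of_truncate_eq_zero (e : TruncatedWittVector p (n + 1) K)
    (he : TruncatedWittVector.truncate (Nat.le_succ n) e = 0) :
    e = dD n (WittVector.teichmuller p (e.coeff (Fin.last n))) := by
  apply TruncatedWittVector.ext
  intro i
  rw [dD_coeff]
  rcases eq_or_lt_of_le (Nat.lt_succ_iff.mp i.2) with h | h
  · rw [if_pos h, teichmuller_coeff_zero]
    congr 1
    exact Fin.ext h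
  · rw [if_neg (by omega)]
    have := congrArg (fun z => TruncatedWittVector.coeff ⟨(i : ℕ), h⟩ z) he
    simp only [TruncatedWittVector.coeff_truncate, TruncatedWittVector.coeff_zero] at this
    rw [← this]
    exact congrArg (fun j : Fin (n + 1) => TruncatedWittVector.coeff j e) (Fin.ext rfl)

variable [IsAlgClosed K]

open Polynomial in
lemma exists_pth_root_sub (γ : K) : ∃ c : K, c ^ p - c = γ := by
  have hp2 : 1 < p := hp.out.one_lt
  have hdeg : (X ^ p - (X + C γ) : K[X]).degree = p := by
    rw [degree_sub_eq_left_of_degree_lt]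
    · exact degree_X_pow p
    · rw [degree_X_pow, degree_X_add_C]
      exact_mod_cast hp2
  obtain ⟨c, hc⟩ := IsAlgClosed.exists_root (X ^ p - (X + C γ) : K[X])
    (by rw [hdeg]; exact_mod_cast (by omega : p ≠ 0))
  refine ⟨c, ?_⟩
  have := hc
  rw [IsRoot.def, eval_sub, eval_pow, eval_X, eval_add, eval_X, eval_C, sub_eq_zero] at this
  rw [this]
  ring

lemma trFrob_sub_one_surjective :
    ∀ (m : ℕ) (a : TruncatedWittVector p m K),
      ∃ x, truncatedWittFrobenius p m K x - x = a := by
  intro m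
  induction m with
  | zero =>
    intro a
    exact ⟨0, by apply TruncatedWittVector.ext; intro i; exact i.elim0⟩
  | succ n ih =>
    intro a
    obtain ⟨y, hy⟩ := ih (TruncatedWittVector.truncate (Nat.le_succ n) a)
    obtain ⟨Y, hY⟩ := TruncatedWittVector.truncate_surjective (p := p) (R := K) (Nat.le_succ n) y
    set e : TruncatedWittVector p (n + 1) K :=
      a - (truncatedWittFrobenius p (n + 1) K Y - Y) with hedef
    have he : TruncatedWittVector.truncate (Nat.le_succ n) e = 0 := by
      rw [hedef, map_sub, map_sub, trFrob_truncate_le, hY, hy, sub_self]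
    set γ : K := e.coeff (Fin.last n) with hγ
    obtain ⟨c, hc⟩ := exists_pth_root_sub (p := p) γ
    refine ⟨Y + dD n (WittVector.teichmuller p c), ?_⟩
    have hadd : truncatedWittFrobenius p (n + 1) K (Y + dD n (WittVector.teichmuller p c))
        = truncatedWittFrobenius p (n + 1) K Y
          + truncatedWittFrobenius p (n + 1) K (dD n (WittVector.teichmuller p c)) :=
      map_add (trFrob (n + 1)) _ _
    rw [hadd, trFrob_dD, map_teichmuller]
    have hfc : _root_.frobenius K p c = c ^ p := rfl
    rw [hfc]
    have key : dD n (WittVector.teichmuller p (c ^ p)) - dD n (WittVector.teichmuller p c) = e := by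
      rw [← dD_sub, eq_dD_of_truncate_eq_zero n e he, ← hγ]
      apply TruncatedWittVector.ext
      intro i
      rw [dD_coeff, dD_coeff]
      rcases eq_or_ne ((i : ℕ)) n with h | h
      · rw [if_pos h, if_pos h, coeff_zero_sub, teichmuller_coeff_zero,
          teichmuller_coeff_zero, teichmuller_coeff_zero, hc]
      · rw [if_neg h, if_neg h]
    rw [add_sub_add_comm, key, hedef]
    ring

end surj


section zmodInjective

variable (N : ℕ) [NeZero N]

lemma zmod_exists_mul_of_ann (a y : ZMod N) (hann : ∀ z : ZMod N, z * a = 0 → z * y = 0) :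
    ∃ c : ZMod N, y = c * a := by
  have hN : (N : ℤ) ≠ 0 := by exact_mod_cast (NeZero.ne N)
  set a' : ℤ := (a.val : ℤ) with ha'
  have haa : ((a' : ℤ) : ZMod N) = a := by
    rw [ha']
    exact_mod_cast (ZMod.natCast_val a).trans (ZMod.cast_id _ _)
  set g : ℤ := (Int.gcd a' (N : ℤ) : ℤ) with hg
  have hga : g ∣ a' := Int.gcd_dvd_left a' (N : ℤ)
  have hgN : g ∣ (N : ℤ) := Int.gcd_dvd_right a' (N : ℤ)
  obtain ⟨a2, ha2⟩ := hga
  obtain ⟨N2, hN2⟩ := hgN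
  have hbezout : g = a' * Int.gcdA a' (N : ℤ) + (N : ℤ) * Int.gcdB a' (N : ℤ) :=
    Int.gcd_eq_gcd_ab a' (N : ℤ)
  have hz : ((N2 : ℤ) : ZMod N) * a = 0 := by
    rw [← haa, ← Int.cast_mul]
    rw [ZMod.intCast_zmod_eq_zero_iff_dvd]
    refine ⟨a2, ?_⟩
    rw [ha2] at *
    rw [hN2]
    ring
  have hzy := hann _ hz
  rw [show ((N2 : ℤ) : ZMod N) * y = (((N2 * (y.val : ℤ)) : ℤ) : ZMod N) by
    push_cast
    rw [ZMod.natCast_val, ZMod.cast_id], ZMod.intCast_zmod_eq_zero_iff_dvd] at hzy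
  -- (N : ℤ) = g * N2 divides N2 * y', so g ∣ y'
  have hN2ne : N2 ≠ 0 := by
    intro h
    rw [h, mul_zero] at hN2
    exact hN hN2
  obtain ⟨w, hw⟩ := hzy
  have hgy : g ∣ (y.val : ℤ) := by
    refine ⟨w, ?_⟩
    have hcalc : N2 * (y.val : ℤ) = N2 * (g * w) := by
      rw [hw, hN2]; ring
    exact mul_left_cancel₀ hN2ne hcalc
  obtain ⟨y2, hy2⟩ := hgy
  refine ⟨((y2 * Int.gcdA a' (N : ℤ) : ℤ) : ZMod N), ?_⟩
  have hyy : ((y.val : ℤ) : ZMod N) = y := by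
    exact_mod_cast (ZMod.natCast_val y).trans (ZMod.cast_id _ _)
  rw [← hyy, hy2]
  push_cast
  rw [hbezout]
  push_cast
  rw [← haa]
  push_cast
  ring_nf
  simp [ZMod.natCast_self]

instance : IsPrincipalIdealRing (ZMod N) :=
  IsPrincipalIdealRing.of_surjective (Int.castRingHom (ZMod N)) ZMod.intCast_surjective

lemma zmod_baer : Module.Baer (ZMod N) (ZMod N) := by
  intro I g
  obtain ⟨a, ha⟩ := (IsPrincipalIdealRing.principal I)
  subst ha
  set y : ZMod N := g ⟨a, Ideal.subset_span rfl⟩ with hy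
  have hann : ∀ z : ZMod N, z * a = 0 → z * y = 0 := by
    intro z hz
    have : z • (⟨a, Ideal.subset_span rfl⟩ : Ideal.span {a}) = 0 := by
      apply Subtype.ext
      show z • a = 0
      rwa [smul_eq_mul]
    rw [hy, ← smul_eq_mul, ← map_smul, this, map_zero]
  obtain ⟨c, hc⟩ := zmod_exists_mul_of_ann N a y hann
  refine ⟨c • LinearMap.id, ?_⟩
  intro x hx
  obtain ⟨r, hr⟩ := Ideal.mem_span_singleton'.mp hx
  have : (⟨x, hx⟩ : Ideal.span {a}) = r • ⟨a, Ideal.subset_span rfl⟩ := by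
    apply Subtype.ext
    show x = r • a
    rw [smul_eq_mul, ← hr]
  rw [this, map_smul, ← hy, hc]
  show c * x = r • (c * a)
  rw [smul_eq_mul, ← hr]
  ring

lemma zmod_module_injective : Module.Injective (ZMod N) (ZMod N) :=
  (zmod_baer N).injective

end zmodInjective


section splitting

variable {K : Type} [Field K] [CharP K p] [IsAlgClosed K] {n : ℕ}
variable [Algebra (ZMod (p ^ n)) (TruncatedWittVector p n K)]

local instance : NeZero (p ^ n) := ⟨pow_ne_zero n hp.out.ne_zero⟩

/-- Frobenius as a `ZMod (p^n)`-linear endomorphism of truncated Witt vectors. -/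
noncomputable def sigmaL :
    TruncatedWittVector p n K →ₗ[ZMod (p ^ n)] TruncatedWittVector p n K where
  toFun := truncatedWittFrobenius p n K
  map_add' := (trFrob n).map_add
  map_smul' := by
    intro a x
    simp only [RingHom.id_apply]
    rw [Algebra.smul_def, Algebra.smul_def]
    have hfix : truncatedWittFrobenius p n K
        (algebraMap (ZMod (p ^ n)) (TruncatedWittVector p n K) a) =
        algebraMap (ZMod (p ^ n)) (TruncatedWittVector p n K) a :=
      (trFrob_fixed_iff _).mpr ⟨a, rfl⟩
    calc truncatedWittFrobenius p n K (algebraMap (ZMod (p ^ n)) _ a * x)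
        = truncatedWittFrobenius p n K (algebraMap (ZMod (p ^ n)) _ a)
          * truncatedWittFrobenius p n K x := (trFrob n).map_mul _ _
      _ = algebraMap (ZMod (p ^ n)) _ a * truncatedWittFrobenius p n K x := by rw [hfix]

/-- `σ - 1` as a `ZMod (p^n)`-linear map. -/
noncomputable def fL : TruncatedWittVector p n K →ₗ[ZMod (p ^ n)] TruncatedWittVector p n K :=
  sigmaL - LinearMap.id

lemma fL_apply (x : TruncatedWittVector p n K) :
    fL x = truncatedWittFrobenius p n K x - x := rfl

lemma fL_eq_zero_iff (x : TruncatedWittVector p n K) :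
    fL x = 0 ↔ x ∈ Set.range (algebraMap (ZMod (p ^ n)) (TruncatedWittVector p n K)) := by
  rw [fL_apply, sub_eq_zero, trFrob_fixed_iff]

lemma fL_surjective : Function.Surjective (fL (p := p) (K := K) (n := n)) := by
  intro a
  obtain ⟨x, hx⟩ := trFrob_sub_one_surjective (p := p) (K := K) n a
  exact ⟨x, by rw [fL_apply, hx]⟩

/-- A `ZMod (p^n)`-linear retraction of the algebra map. -/
lemma exists_retraction :
    ∃ φ : TruncatedWittVector p n K →ₗ[ZMod (p ^ n)] ZMod (p ^ n),
      ∀ a, φ (algebraMap (ZMod (p ^ n)) (TruncatedWittVector p n K) a) = a := by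
  obtain ⟨φ, hφ⟩ := (zmod_module_injective (p ^ n)).out
    (Algebra.linearMap (ZMod (p ^ n)) (TruncatedWittVector p n K))
    (algebraMap_injective_trunc) LinearMap.id
  exact ⟨φ, fun a => hφ a⟩

/-- A linear section of `σ - 1`. -/
lemma exists_section :
    ∃ s : TruncatedWittVector p n K →ₗ[ZMod (p ^ n)] TruncatedWittVector p n K,
      ∀ w, fL (s w) = w := by
  classical
  obtain ⟨φ, hφ⟩ := exists_retraction (p := p) (K := K) (n := n)
  set A := ZMod (p ^ n)
  set W := TruncatedWittVector p n K
  set ι : A →ₗ[A] W := Algebra.linearMap A W with hι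
  set π : W →ₗ[A] W := ι.comp φ with hπ
  have hφι : ∀ a, φ (ι a) = a := hφ
  have hππ : ∀ x, π (π x) = π x := by
    intro x
    show ι (φ (ι (φ x))) = ι (φ x)
    rw [hφι]
  set Kc := LinearMap.ker π with hKc
  have hinj : Function.Injective (fL.comp Kc.subtype) := by
    intro x y hxy
    have hsub : fL ((x : W) - (y : W)) = 0 := by
      rw [map_sub]
      exact sub_eq_zero.mpr hxy
    obtain ⟨a, ha⟩ := (fL_eq_zero_iff _).mp hsub
    have hmem : (x : W) - (y : W) ∈ Kc := sub_mem x.2 y.2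
    have : π ((x : W) - (y : W)) = (x : W) - (y : W) := by
      rw [← ha]
      show ι (φ (ι a)) = ι a
      rw [hφι]
    rw [LinearMap.mem_ker.mp hmem] at this
    exact Subtype.ext (sub_eq_zero.mp this.symm)
  have hsurj : Function.Surjective (fL.comp Kc.subtype) := by
    intro w
    obtain ⟨x, hx⟩ := fL_surjective (p := p) (K := K) (n := n) w
    have hfπ : fL (π x) = 0 := (fL_eq_zero_iff _).mpr ⟨φ x, rfl⟩
    refine ⟨⟨x - π x, ?_⟩, ?_⟩
    · rw [LinearMap.mem_ker, map_sub, hππ, sub_self]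
    · show fL (x - π x) = w
      rw [map_sub, hfπ, sub_zero, hx]
  set e := LinearEquiv.ofBijective (fL.comp Kc.subtype) ⟨hinj, hsurj⟩ with he
  refine ⟨Kc.subtype.comp (e.symm : W →ₗ[A] Kc), ?_⟩
  intro w
  show fL (Kc.subtype (e.symm w)) = w
  have : (fL.comp Kc.subtype) (e.symm w) = w := by
    show e (e.symm w) = w
    exact e.apply_symm_apply w
  exact this

lemma rTensor_algebraMap_eq (T : Type*) [AddCommGroup T] [Module (ZMod (p ^ n)) T]
    (u : (ZMod (p ^ n)) ⊗[ZMod (p ^ n)] T) :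
    LinearMap.rTensor T (Algebra.linearMap (ZMod (p ^ n)) (TruncatedWittVector p n K)) u
      = (1 : TruncatedWittVector p n K) ⊗ₜ[ZMod (p ^ n)] (TensorProduct.lid (ZMod (p ^ n)) T u) := by
  induction u with
  | zero => simp
  | tmul a x =>
    rw [LinearMap.rTensor_tmul, TensorProduct.lid_tmul]
    show algebraMap (ZMod (p ^ n)) (TruncatedWittVector p n K) a ⊗ₜ[ZMod (p ^ n)] x = _
    rw [Algebra.algebraMap_eq_smul_one, TensorProduct.smul_tmul]
  | add u v hu hv => rw [map_add, map_add, hu, hv, TensorProduct.tmul_add]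

lemma tensor_ker (T : Type*) [AddCommGroup T] [Module (ZMod (p ^ n)) T]
    (t : (TruncatedWittVector p n K) ⊗[ZMod (p ^ n)] T)
    (ht : LinearMap.rTensor T (fL (p := p) (K := K) (n := n)) t = 0) :
    ∃ m : T, t = (1 : TruncatedWittVector p n K) ⊗ₜ[ZMod (p ^ n)] m := by
  obtain ⟨s, hs⟩ := exists_section (p := p) (K := K) (n := n)
  set A := ZMod (p ^ n)
  set W := TruncatedWittVector p n K
  set ι : A →ₗ[A] W := Algebra.linearMap A W with hι
  obtain ⟨φ, hφ⟩ := exists_retraction (p := p) (K := K) (n := n)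
  have hφι : ∀ a, φ (ι a) = a := hφ
  set ρ : W →ₗ[A] W := LinearMap.id - s.comp fL with hρdef
  have hρ : ∀ x, ρ x = ι (φ (ρ x)) := by
    intro x
    have hzero : fL (ρ x) = 0 := by
      rw [hρdef]
      show fL (x - s (fL x)) = 0
      rw [map_sub, hs, sub_self]
    obtain ⟨a, ha⟩ := (fL_eq_zero_iff _).mp hzero
    rw [← ha]
    show ι a = ι (φ (ι a))
    rw [hφι]
  have hρcomp : ρ = ι.comp (φ.comp ρ) := by
    apply LinearMap.ext
    intro x
    exact hρ x
  have htt : LinearMap.rTensor T ρ t = t := by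
    rw [hρdef, LinearMap.rTensor_sub, LinearMap.sub_apply, LinearMap.rTensor_comp,
      LinearMap.coe_comp, Function.comp_apply, ht, map_zero, sub_zero,
      LinearMap.rTensor_id, LinearMap.id_apply]
  refine ⟨TensorProduct.lid A T (LinearMap.rTensor T (φ.comp ρ) t), ?_⟩
  conv_lhs => rw [← htt, hρcomp]
  rw [LinearMap.rTensor_comp, LinearMap.coe_comp, Function.comp_apply,
    rTensor_algebraMap_eq]

end splitting


section finrep

lemma exists_fin_rep {R MM NN : Type*} [CommSemiring R] [AddCommMonoid MM] [AddCommMonoid NN]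
    [Module R MM] [Module R NN] (x : TensorProduct R MM NN) :
    ∃ (r : ℕ) (f : Fin r → MM) (g : Fin r → NN), x = ∑ i, f i ⊗ₜ[R] g i := by
  induction x with
  | zero => exact ⟨0, Fin.elim0, Fin.elim0, by simp⟩
  | tmul a b => exact ⟨1, fun _ => a, fun _ => b, by simp⟩
  | add x y hx hy =>
    obtain ⟨rx, fx, gx, hx⟩ := hx
    obtain ⟨ry, fy, gy, hy⟩ := hy
    refine ⟨rx + ry, Fin.append fx fy, Fin.append gx gy, ?_⟩
    rw [Fin.sum_univ_add]
    simp only [Fin.append_left, Fin.append_right]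
    rw [hx, hy]

lemma liftBaseChange_sum {R AA MM NN : Type*} [CommRing R] [CommRing AA] [Algebra R AA]
    [AddCommMonoid MM] [Module R MM] [AddCommMonoid NN] [Module R NN] [Module AA NN]
    [IsScalarTower R AA NN] (l : MM →ₗ[R] NN) (r : ℕ) (f : Fin r → AA) (g : Fin r → MM) :
    (l.liftBaseChange AA) (∑ i, f i ⊗ₜ[R] g i) = ∑ i, f i • l (g i) := by
  rw [map_sum]
  simp [LinearMap.liftBaseChange_tmul]

end finrep

section main

variable {K : Type} [Field K] [CharP K p] [IsAlgClosed K] {n : ℕ}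
variable [Algebra (ZMod (p ^ n)) (TruncatedWittVector p n K)]
variable {M : Type*} [AddCommGroup M] [Module (TruncatedWittVector p n K) M]
variable [Module (ZMod (p ^ n)) M]
variable [IsScalarTower (ZMod (p ^ n)) (TruncatedWittVector p n K) M]
variable (Φ : M →+ M) [Module (ZMod (p ^ n)) Φ.fixedSubgroup]

local instance : NeZero (p ^ n) := ⟨pow_ne_zero n hp.out.ne_zero⟩

lemma p_pow_n_eq_zero : ((p : TruncatedWittVector p n K)) ^ n = 0 := by
  have h := TruncatedWittVector.p_pow_natCast_eq_zero p n K
  push_cast at h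
  exact h

lemma main_aux (hΦ : ∀ c x, Φ (c • x) = truncatedWittFrobenius p n K c • Φ x) :
    ∀ r (l : Fin r → TruncatedWittVector p n K) (m : Fin r → Φ.fixedSubgroup),
      (∑ i, l i • ((m i : M))) = 0 →
      (∑ i, l i ⊗ₜ[ZMod (p ^ n)] m i :
        TensorProduct (ZMod (p ^ n)) (TruncatedWittVector p n K) Φ.fixedSubgroup) = 0 := by
  classical
  set A := ZMod (p ^ n)
  set W := TruncatedWittVector p n K
  set ℓ : Φ.fixedSubgroup →ₗ[A] M := Φ.fixedSubgroup.subtype.toZModLinearMap (p ^ n) with hℓ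
  have hℓcoe : ∀ x : Φ.fixedSubgroup, ℓ x = (x : M) := fun _ => rfl
  intro r
  induction r using Nat.strong_induction_on with
  | _ r IH =>
    intro l m hrel
    by_cases hall : ∀ i, l i = 0
    · have : ∀ i ∈ Finset.univ, (l i ⊗ₜ[A] m i : TensorProduct A W Φ.fixedSubgroup) = 0 := by
        intro i _
        rw [hall i, TensorProduct.zero_tmul]
      exact Finset.sum_eq_zero this
    push_neg at hall
    obtain ⟨i1, hi1⟩ := hall
    -- decompose the coefficients
    have hdec : ∀ i, ∃ (v : ℕ) (c : W), l i = (p : W) ^ v * c ∧ v ≤ n ∧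
        (l i = 0 → v = n) ∧ (l i ≠ 0 → v < n ∧ IsUnit c) := by
      intro i
      by_cases hi : l i = 0
      · exact ⟨n, 0, by rw [hi, mul_zero], le_rfl, fun _ => rfl, fun h => absurd hi h⟩
      · have hx : WittVector.truncate n ((l i).out) = l i := by
          apply TruncatedWittVector.ext
          intro j
          rw [WittVector.coeff_truncate, TruncatedWittVector.coeff_out]
        have hne : (l i).out ≠ 0 := by
          intro h0
          rw [h0, map_zero] at hx
          exact hi hx.symm
        obtain ⟨mi, b, hb0, heq⟩ := WittVector.exists_eq_pow_p_mul ((l i).out) hne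
        have hli : l i = (p : W) ^ mi * WittVector.truncate n b := by
          rw [← hx, heq, map_mul, map_pow, map_natCast]
        have hmi : mi < n := by
          by_contra hge
          push_neg at hge
          apply hi
          rw [hli, show (p : W) ^ mi = (p : W) ^ n * (p : W) ^ (mi - n) by
            rw [← pow_add, Nat.add_sub_cancel' hge], p_pow_n_eq_zero (p := p) (K := K) (n := n)]
          ring
        refine ⟨mi, WittVector.truncate n b, hli, le_of_lt hmi, fun h => absurd h hi, fun _ => ⟨hmi, ?_⟩⟩
        exact (WittVector.isUnit_of_coeff_zero_ne_zero b hb0).map (WittVector.truncate n)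
    choose v c hvc hvle hvzero hvunit using hdec
    obtain ⟨i0, -, hmin⟩ := Finset.exists_min_image Finset.univ v ⟨i1, Finset.mem_univ i1⟩
    have hmin' : ∀ i, v i0 ≤ v i := fun i => hmin i (Finset.mem_univ i)
    have hvi0 : v i0 < n := lt_of_le_of_lt (hmin' i1) (hvunit i1 hi1).1
    have hli0 : l i0 ≠ 0 := by
      intro h
      rw [hvzero i0 h] at hvi0
      exact lt_irrefl n hvi0
    have hcu : IsUnit (c i0) := (hvunit i0 hli0).2
    set uu := hcu.unit with huu
    set a := v i0 with ha
    set μ : Fin r → W := fun i => (p : W) ^ (v i - a) * c i with hμdef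
    have hμ : ∀ i, l i = (p : W) ^ a * μ i := by
      intro i
      rw [hvc i, hμdef]
      rw [show (p : W) ^ v i = (p : W) ^ a * (p : W) ^ (v i - a) by
        rw [← pow_add, Nat.add_sub_cancel' (hmin' i)]]
      ring
    set l' : Fin r → W := fun i => (↑uu⁻¹ : W) * μ i with hl'def
    set m' : Fin r → Φ.fixedSubgroup := fun i => (p ^ a) • m i with hm'def
    have hm'coe : ∀ i, ((m' i : M)) = ((p : W) ^ a) • ((m i : M)) := by
      intro i
      have h1 : ((m' i : M)) = (p ^ a : ℕ) • ((m i : M)) :=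
        map_nsmul Φ.fixedSubgroup.subtype (p ^ a) (m i)
      rw [h1, ← Nat.cast_smul_eq_nsmul W (p ^ a) ((m i : M)), Nat.cast_pow]
    have hrel' : ∑ i, l' i • ((m' i : M)) = 0 := by
      have hterm : ∀ i, l' i • ((m' i : M)) = (↑uu⁻¹ : W) • (l i • ((m i : M))) := by
        intro i
        rw [hm'coe i, smul_smul, smul_smul]
        congr 1
        show (↑uu⁻¹ : W) * μ i * (p : W) ^ a = (↑uu⁻¹ : W) * l i
        rw [hμ i]; ring
      rw [Finset.sum_congr rfl (fun i _ => hterm i), ← Finset.smul_sum, hrel, smul_zero]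
    have hgoal : ∀ i, (l i ⊗ₜ[A] m i : TensorProduct A W Φ.fixedSubgroup)
        = (uu : W) • (l' i ⊗ₜ[A] m' i) := by
      intro i
      rw [TensorProduct.smul_tmul']
      rw [show (uu : W) • (l' i) = μ i by
        show (uu : W) • ((↑uu⁻¹ : W) * μ i) = μ i
        rw [smul_eq_mul, Units.mul_inv_cancel_left]]
      show l i ⊗ₜ[A] m i = μ i ⊗ₜ[A] ((p ^ a) • m i)
      rw [show (μ i ⊗ₜ[A] ((p ^ a) • m i) : TensorProduct A W Φ.fixedSubgroup)
          = (p ^ a : ℕ) • (μ i ⊗ₜ[A] m i) from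
        map_nsmul ((TensorProduct.mk A W Φ.fixedSubgroup) (μ i)) (p ^ a) (m i)]
      rw [← Nat.cast_smul_eq_nsmul A (p ^ a) (μ i ⊗ₜ[A] m i), TensorProduct.smul_tmul']
      congr 1
      rw [Algebra.smul_def, map_natCast, hμ i]
      push_cast
      ring
    rw [Finset.sum_congr rfl (fun i _ => hgoal i), ← Finset.smul_sum]
    suffices hz : (∑ i, l' i ⊗ₜ[A] m' i : TensorProduct A W Φ.fixedSubgroup) = 0 by
      rw [hz, smul_zero]
    have hone : l' i0 = 1 := by
      show (↑uu⁻¹ : W) * μ i0 = 1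
      have hμ0 : μ i0 = (uu : W) := by
        show (p : W) ^ (v i0 - a) * c i0 = (uu : W)
        rw [ha, Nat.sub_self, pow_zero, one_mul, huu, IsUnit.unit_spec]
      rw [hμ0, Units.inv_mul]
    have hr0 : r ≠ 0 := by
      intro h
      subst h
      exact i1.elim0
    obtain ⟨r', rfl⟩ : ∃ r', r = r' + 1 := ⟨r - 1, by omega⟩
    have hfix : ∀ i, Φ ((m' i : M)) = (m' i : M) := fun i => (m' i).2
    have hΦ0 : ∑ i, truncatedWittFrobenius p n K (l' i) • ((m' i : M)) = 0 := by
      have h1 := congrArg Φ hrel'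
      rw [map_zero, map_sum] at h1
      rw [← h1]
      apply Finset.sum_congr rfl
      intro i _
      rw [hΦ (l' i) ((m' i : M)), hfix i]
    have hrel2 : ∑ i, (truncatedWittFrobenius p n K (l' i) - l' i) • ((m' i : M)) = 0 := by
      rw [Finset.sum_congr rfl (fun i (_ : i ∈ Finset.univ) => sub_smul
        (truncatedWittFrobenius p n K (l' i)) (l' i) ((m' i : M))),
        Finset.sum_sub_distrib, hΦ0, hrel', sub_zero]
    set gfun : Fin (r' + 1) → W := fun i => truncatedWittFrobenius p n K (l' i) - l' i
      with hgfun
    have hg0 : gfun i0 = 0 := by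
      show truncatedWittFrobenius p n K (l' i0) - l' i0 = 0
      rw [hone]
      have h1 : truncatedWittFrobenius p n K (1 : W) = 1 := (trFrob (p := p) (R := K) n).map_one
      rw [h1, sub_self]
    have hrel2' : ∑ j : Fin r', gfun (i0.succAbove j) • ((m' (i0.succAbove j) : M)) = 0 := by
      have h2 := hrel2
      rw [Fin.sum_univ_succAbove (fun i => gfun i • ((m' i : M))) i0] at h2
      rw [show gfun i0 • ((m' i0 : M)) = 0 by rw [hg0, zero_smul], zero_add] at h2
      exact h2
    have hIH := IH r' (by omega) (fun j => gfun (i0.succAbove j))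
      (fun j => m' (i0.succAbove j)) hrel2'
    have hker : LinearMap.rTensor Φ.fixedSubgroup (fL (p := p) (K := K) (n := n))
        (∑ i, l' i ⊗ₜ[A] m' i) = 0 := by
      rw [map_sum]
      have hterm : ∀ i, LinearMap.rTensor Φ.fixedSubgroup (fL (p := p) (K := K) (n := n))
          (l' i ⊗ₜ[A] m' i) = gfun i ⊗ₜ[A] m' i := by
        intro i
        rw [LinearMap.rTensor_tmul, fL_apply]
      rw [Finset.sum_congr rfl (fun i _ => hterm i),
        Fin.sum_univ_succAbove (fun i => (gfun i ⊗ₜ[A] m' i :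
          TensorProduct A W Φ.fixedSubgroup)) i0]
      rw [show (gfun i0 ⊗ₜ[A] m' i0 : TensorProduct A W Φ.fixedSubgroup) = 0 by
        rw [hg0, TensorProduct.zero_tmul], zero_add]
      exact hIH
    obtain ⟨mt, hmt⟩ := tensor_ker Φ.fixedSubgroup _ hker
    set μmap := ℓ.liftBaseChange W with hμmap
    have hev : μmap (∑ i, l' i ⊗ₜ[A] m' i) = 0 := by
      rw [map_sum]
      have hterm : ∀ i, μmap (l' i ⊗ₜ[A] m' i) = l' i • ((m' i : M)) := by
        intro i
        rw [hμmap, LinearMap.liftBaseChange_tmul, hℓcoe]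
      rw [Finset.sum_congr rfl (fun i _ => hterm i), hrel']
    rw [hmt] at hev ⊢
    rw [hμmap, LinearMap.liftBaseChange_tmul, one_smul, hℓcoe] at hev
    rw [show mt = 0 from Subtype.ext hev, TensorProduct.tmul_zero]

end main

end StmtAux







/-- With `k` an algebraic closure of `𝔽_q`, `M` a finitely generated
`W_n(k)`-module and `Φ : M → M` a `σ`-linear endomorphism, the canonical `W_n(k)`-linear map
`M^{Φ=1} ⊗_{ℤ/pⁿ} W_n(k) → M` (sending `m ⊗ λ` to `λ • m`) is injective. -/
theorem fixedPoints_baseChange_injective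
    (p d n : ℕ) [Fact p.Prime] (hd : d ≠ 0)
    (M : Type*) [AddCommGroup M] [Module (TruncatedWittVector p n (FqBar p d)) M]
    [Module.Finite (TruncatedWittVector p n (FqBar p d)) M]
    (Φ : M →+ M)
    (hΦ : ∀ (c : TruncatedWittVector p n (FqBar p d)) (x : M),
      Φ (c • x) = truncatedWittFrobenius p n (FqBar p d) c • Φ x) :
    letI W := TruncatedWittVector p n (FqBar p d)
    letI : Algebra (ZMod (p ^ n)) W :=
      ZMod.algebra' W (ringChar W)
        (ringChar.dvd (TruncatedWittVector.p_pow_natCast_eq_zero p n (FqBar p d)))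
    letI : Module (ZMod (p ^ n)) M := Module.compHom M (algebraMap (ZMod (p ^ n)) W)
    haveI : IsScalarTower (ZMod (p ^ n)) W M :=
      IsScalarTower.of_algebraMap_smul fun r x => rfl
    letI : Module (ZMod (p ^ n)) (Φ.fixedSubgroup) := AddCommGroup.zmodModule (by
      intro x
      apply Subtype.ext
      show (p ^ n) • (x : M) = 0
      rw [← Nat.cast_smul_eq_nsmul W, TruncatedWittVector.p_pow_natCast_eq_zero p n,
        zero_smul])
    Function.Injective ((Φ.fixedSubgroup.subtype.toZModLinearMap (p ^ n)).liftBaseChange W) := by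
  letI W := TruncatedWittVector p n (FqBar p d)
  letI : Algebra (ZMod (p ^ n)) W :=
    ZMod.algebra' W (ringChar W)
      (ringChar.dvd (TruncatedWittVector.p_pow_natCast_eq_zero p n (FqBar p d)))
  letI : Module (ZMod (p ^ n)) M := Module.compHom M (algebraMap (ZMod (p ^ n)) W)
  haveI : IsScalarTower (ZMod (p ^ n)) W M :=
    IsScalarTower.of_algebraMap_smul fun r x => rfl
  letI : Module (ZMod (p ^ n)) (Φ.fixedSubgroup) := AddCommGroup.zmodModule (by
    intro x
    apply Subtype.ext
    show (p ^ n) • (x : M) = 0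
    rw [← Nat.cast_smul_eq_nsmul W, TruncatedWittVector.p_pow_natCast_eq_zero p n,
      zero_smul])
  intro t1 t2 heq
  set ℓ := Φ.fixedSubgroup.subtype.toZModLinearMap (p ^ n) with hℓ
  set μ := ℓ.liftBaseChange W with hμ
  have h0 : μ (t1 - t2) = 0 := by
    have hsub := μ.map_sub t1 t2
    rw [hsub, heq, sub_self]
  obtain ⟨r, lw, mT, hrep⟩ := StmtAux.exists_fin_rep (t1 - t2)
  have hrel : ∑ i, lw i • ((mT i : M)) = 0 := by
    rw [hrep, hμ, StmtAux.liftBaseChange_sum ℓ r lw mT] at h0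
    exact h0
  have hmain := StmtAux.main_aux (p := p) (K := FqBar p d) (n := n) (M := M) Φ hΦ r lw mT hrel
  have hz : t1 - t2 = 0 := hrep.trans hmain
  exact sub_eq_zero.mp hz
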